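/- There exists a countably infinite subset N of ℝ^{ω₁} such that N is closed in ℝ^{ω₁}, N is discrete in the subspace topology, and N is not C*-embedded in ℝ^{ω₁}; that is, there is a bounded continuous function N → ℝ that has no continuous extension to all of ℝ^{ω₁}. -/

import Mathlib

open Set Ordinal

/-- An index type of cardinality `ℵ₁`: the countable ordinals. -/
abbrev Omega1Index : Type 1 := {o : Ordinal // o < Ordinal.omega 1}

open Cardinal

namespace CC

abbrev ι := Omega1Index



theorem card_le_aleph0 (o : Ordinal.{0}) (h : o < Ordinal.omega 1) : o.card ≤ ℵ₀ := by
  have h2 : o.card < ℵ₁ := by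
    rw [← Cardinal.lt_ord, Cardinal.ord_aleph]; exact h
  rw [← Cardinal.succ_aleph0] at h2
  exact Order.lt_succ_iff.1 h2

theorem countable_Iio (β : ι) : Countable {γ : ι // γ < β} := by
  have h1 : #(Set.Iio β.val) = Cardinal.lift.{1,0} β.val.card := Ordinal.mk_Iio_ordinal β.val
  have h3 : #(Set.Iio β.val) ≤ ℵ₀ := by
    rw [h1, ← Cardinal.lift_aleph0.{1,0}]
    exact Cardinal.lift_le.2 (card_le_aleph0 _ β.2)
  have hc : Countable (Set.Iio β.val) := Cardinal.mk_le_aleph0_iff.1 h3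
  exact hc.of_equiv (α := Set.Iio β.val)
    ⟨fun x => ⟨⟨x.1, lt_trans x.2 β.2⟩, x.2⟩,
     fun y => ⟨y.1.1, y.2⟩, fun x => rfl, fun y => rfl⟩

theorem exists_gt (β : ι) : ∃ γ : ι, β < γ :=
  ⟨⟨β.val + 1, (Cardinal.isSuccLimit_omega 1).succ_lt β.2⟩,
    (Order.lt_succ _ : β.val < β.val + 1)⟩

theorem uncountable_ι : Uncountable ι := by
  rw [← Cardinal.aleph0_lt_mk_iff]
  have : #ι = #(Set.Iio (Ordinal.omega 1)) := rfl
  rw [this, Ordinal.mk_Iio_ordinal, Ordinal.card_omega, ← Cardinal.lift_aleph0.{1,0}]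
  exact Cardinal.lift_lt.2 aleph0_lt_aleph_one

theorem countable_sup (v : ℕ → ι) : ∃ β : ι, ∀ n, v n < β := by
  have h := Ordinal.iSup_lt_omega_one (f := fun n => (v n).val) (fun n => (v n).2)
  refine ⟨⟨(⨆ n, (v n).val) + 1, (Cardinal.isSuccLimit_omega 1).succ_lt h⟩, fun n => ?_⟩
  have h2 : (v n).val ≤ ⨆ n, (v n).val := Ordinal.le_iSup _ n
  have h3 : (⨆ n, (v n).val) < (⨆ n, (v n).val) + 1 := Order.lt_succ _
  exact Subtype.coe_lt_coe.1 (lt_of_le_of_lt h2 h3)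




/-- almost-inclusion -/
def AlmSub (A B : Set ℕ) : Prop := (A \ B).Finite

theorem AlmSub.trans {A B C : Set ℕ} (h1 : AlmSub A B) (h2 : AlmSub B C) : AlmSub A C := by
  have : A \ C ⊆ (A \ B) ∪ (B \ C) := by
    intro x hx
    by_cases hb : x ∈ B
    · exact Or.inr ⟨hb, hx.2⟩
    · exact Or.inl ⟨hx.1, hb⟩
  exact Set.Finite.subset (h1.union h2) this

theorem AlmSub.of_subset {A B : Set ℕ} (h : A ⊆ B) : AlmSub A B := by
  have : A \ B = ∅ := by rwa [Set.diff_eq_empty]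
  rw [AlmSub, this]; exact Set.finite_empty

theorem AlmSub.infinite_inter {A B : Set ℕ} (hA : A.Infinite) (h : AlmSub A B) :
    (A ∩ B).Infinite := by
  rw [← Set.diff_diff_right_self]
  exact hA.diff h

/-- a chain's finite-index intersections are almost the whole thing -/
theorem chain_diff_finite (F : ℕ → Set ℕ) (hstep : ∀ i, AlmSub (F (i+1)) (F i)) :
    ∀ i j, j ≤ i → AlmSub (F i) (F j) := by
  intro i
  induction i with
  | zero => intro j hj; rw [Nat.le_zero.1 hj]; exact AlmSub.of_subset (le_refl _)
  | succ n ih =>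
    intro j hj
    rcases Nat.lt_or_ge j (n+1) with h | h
    · exact (hstep n).trans (ih j (Nat.lt_succ_iff.1 h))
    · rw [Nat.le_antisymm hj h]; exact AlmSub.of_subset (le_refl _)

/-- pseudo-intersection of an almost-decreasing chain of infinite sets -/
theorem exists_pseudo_intersection (F : ℕ → Set ℕ) (hinf : ∀ i, (F i).Infinite)
    (hstep : ∀ i, AlmSub (F (i+1)) (F i)) :
    ∃ B : Set ℕ, B.Infinite ∧ ∀ i, AlmSub B (F i) := by
  classical
  set G : ℕ → Set ℕ := fun i => ⋂ j ∈ Finset.range (i+1), F j with hG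
  have hGsub : ∀ i j, j ≤ i → G i ⊆ F j := by
    intro i j hj x hx
    simp only [hG, Set.mem_iInter] at hx
    exact hx j (Finset.mem_range.2 (Nat.lt_succ_of_le hj))
  have hGinf : ∀ i, (G i).Infinite := by
    intro i
    have h1 : F i \ G i ⊆ ⋃ j ∈ Finset.range (i+1), (F i \ F j) := by
      intro x hx
      simp only [hG, Set.mem_iInter, not_forall, Set.mem_diff] at hx
      obtain ⟨j, hj1, hj2⟩ := hx.2
      exact Set.mem_biUnion hj1 ⟨hx.1, hj2⟩
    have h2 : (F i \ G i).Finite := by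
      refine Set.Finite.subset (Set.Finite.biUnion (Finset.range (i+1)).finite_toSet ?_) h1
      intro j hj
      exact chain_diff_finite F hstep i j (Nat.lt_succ_iff.1 (Finset.mem_range.1 (by simpa using hj)))
    have : (F i ∩ G i).Infinite := by
      rw [← Set.diff_diff_right_self]; exact (hinf i).diff h2
    exact this.mono (Set.inter_subset_right)
  -- recursive strictly increasing picks
  have hpick : ∀ i (x : ℕ), ∃ y, y ∈ G i ∧ x < y := fun i x => by
    obtain ⟨b, hb, hxb⟩ := (hGinf i).exists_gt x
    exact ⟨b, hb, hxb⟩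
  set a : ℕ → ℕ := Nat.rec (Classical.choose (hpick 0 0))
    (fun i ai => Classical.choose (hpick (i+1) ai)) with ha
  have ha0 : a 0 ∈ G 0 := (Classical.choose_spec (hpick 0 0)).1
  have haS : ∀ i, a (i+1) ∈ G (i+1) ∧ a i < a (i+1) := by
    intro i
    exact Classical.choose_spec (hpick (i+1) (a i))
  have hmem : ∀ i, a i ∈ G i := by
    intro i; cases i with
    | zero => exact ha0
    | succ n => exact (haS n).1
  have hmono : StrictMono a := strictMono_nat_of_lt_succ (fun i => (haS i).2)
  refine ⟨Set.range a, Set.infinite_range_of_injective hmono.injective, ?_⟩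
  intro i
  have : Set.range a \ F i ⊆ a '' (Set.Iio i) := by
    rintro x ⟨⟨j, rfl⟩, hxF⟩
    by_cases hj : j < i
    · exact ⟨j, hj, rfl⟩
    · exact absurd (hGsub j i (Nat.le_of_not_lt hj) (hmem j)) hxF
  exact Set.Finite.subset ((Set.finite_Iio i).image a) this

/-- disjoint refinement of countably many infinite sets -/
theorem exists_disjoint_refinement (B : ℕ → Set ℕ) (hinf : ∀ m, (B m).Infinite) :
    ∃ C : ℕ → Set ℕ, (∀ m, C m ⊆ B m) ∧ (∀ m, (C m).Infinite) ∧
      (∀ m m', m ≠ m' → (C m ∩ C m') = ∅) := by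
  classical
  have hpick : ∀ t (x : ℕ), ∃ y, y ∈ B (Nat.unpair t).1 ∧ x < y := fun t x =>
    (hinf _).exists_gt x
  set a : ℕ → ℕ := Nat.rec (Classical.choose (hpick 0 0))
    (fun t at_ => Classical.choose (hpick (t+1) at_)) with ha
  have ha0 : a 0 ∈ B (Nat.unpair 0).1 := (Classical.choose_spec (hpick 0 0)).1
  have haS : ∀ t, a (t+1) ∈ B (Nat.unpair (t+1)).1 ∧ a t < a (t+1) := fun t =>
    Classical.choose_spec (hpick (t+1) (a t))
  have hmem : ∀ t, a t ∈ B (Nat.unpair t).1 := by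
    intro t; cases t with
    | zero => exact ha0
    | succ n => exact (haS n).1
  have hmono : StrictMono a := strictMono_nat_of_lt_succ (fun i => (haS i).2)
  refine ⟨fun m => a '' {t | (Nat.unpair t).1 = m}, ?_, ?_, ?_⟩
  · rintro m x ⟨t, ht, rfl⟩
    rw [← ht]; exact hmem t
  · intro m
    refine Set.Infinite.image (Set.injOn_of_injective hmono.injective) ?_
    refine Set.infinite_of_injective_forall_mem (f := fun i => Nat.pair m i)
      (fun i j hij => by simpa using congrArg (fun x => (Nat.unpair x).2) hij) (fun i => by simp)
  · intro m m' hmm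
    refine Set.eq_empty_iff_forall_notMem.2 ?_
    rintro x ⟨⟨t, ht, rfl⟩, ⟨t', ht', hat⟩⟩
    have : t = t' := hmono.injective hat.symm
    exact hmm (by rw [← ht, ← ht', this])

/-- greedy injective selection of rationals in prescribed intervals -/
theorem exists_injective_rationals (I : ℕ → ℚ × ℚ) (hI : ∀ m, (I m).1 < (I m).2) :
    ∃ f : ℕ → ℚ, Function.Injective f ∧ ∀ m, f m ∈ Set.Ioo (I m).1 (I m).2 := by
  classical
  have hpick : ∀ (m : ℕ) (g : ℕ → ℚ), ∃ q : ℚ,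
      q ∈ Set.Ioo (I m).1 (I m).2 ∧ ∀ j < m, q ≠ g j := by
    intro m g
    have h1 : (Set.Ioo (I m).1 (I m).2).Infinite := Set.Ioo_infinite (hI m)
    have h2 : ((Set.Ioo (I m).1 (I m).2) \ (g '' (Set.Iio m))).Infinite :=
      h1.diff ((Set.finite_Iio m).image g)
    obtain ⟨q, hq⟩ := h2.nonempty
    refine ⟨q, hq.1, fun j hj hqj => hq.2 ⟨j, hj, hqj.symm⟩⟩
  -- iterate, carrying the partial function
  set step : ℕ → (ℕ → ℚ) → (ℕ → ℚ) := fun m g =>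
    Function.update g m (Classical.choose (hpick m g)) with hstep
  set G : ℕ → (ℕ → ℚ) := Nat.rec (fun _ => 0) (fun m g => step m g) with hGdef
  have hGS : ∀ m, G (m+1) = step m (G m) := fun m => rfl
  -- stability
  have hstab : ∀ m k, m < k → G k m = G (m+1) m := by
    intro m k
    induction k with
    | zero => intro h; exact absurd h (Nat.not_lt_zero m)
    | succ n ih =>
      intro h
      rcases Nat.lt_or_ge m n with h2 | h2
      · rw [hGS n, hstep]
        simp only [Function.update]
        rw [dif_neg (Nat.ne_of_lt h2)]
        exact ih h2
      · have : m = n := le_antisymm (Nat.lt_succ_iff.1 h) h2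
        subst this; rfl
  set f : ℕ → ℚ := fun m => G (m+1) m with hf
  have hfval : ∀ m, f m = Classical.choose (hpick m (G m)) := by
    intro m
    rw [hf]
    show (step m (G m)) m = _
    rw [hstep]; simp [Function.update]
  have hfIoo : ∀ m, f m ∈ Set.Ioo (I m).1 (I m).2 := by
    intro m; rw [hfval m]; exact (Classical.choose_spec (hpick m (G m))).1
  have hfne : ∀ j m, j < m → f m ≠ f j := by
    intro j m hjm
    rw [hfval m]
    have h2 := (Classical.choose_spec (hpick m (G m))).2 j hjm
    have : G m j = f j := by
      rw [hf]
      exact (hstab j m hjm).symm ▸ rfl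
    rw [← this]
    exact h2
  refine ⟨f, ?_, hfIoo⟩
  intro m m' h
  rcases lt_trichotomy m m' with h1 | h1 | h1
  · exact absurd h.symm (hfne m m' h1)
  · exact h1
  · exact absurd h (hfne m' m h1)

/-- an enumeration of a countable nonempty type hitting everything infinitely often -/
theorem exists_surj_infinitely_often (T : Type*) [Countable T] [Nonempty T] :
    ∃ e : ℕ → T, ∀ t : T, {m | e m = t}.Infinite := by
  obtain ⟨f, hf⟩ := exists_surjective_nat T
  refine ⟨fun m => f (Nat.unpair m).1, fun t => ?_⟩
  obtain ⟨k, rfl⟩ := hf t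
  refine Set.infinite_of_injective_forall_mem (f := fun i => Nat.pair k i)
    (fun i j hij => by simpa using congrArg (fun x => (Nat.unpair x).2) hij) (fun i => by simp)


-- Section 3: levels
abbrev Lv := ℚ → Set ℕ

def act (d : Lv) (q : ℚ) : Prop := (d q).Infinite

def LevelOK (d : Lv) : Prop :=
  (∀ q q', q ≠ q' → (d q ∩ d q').Finite) ∧ (∃ q, act d q)

def Below (dlo dhi : Lv) : Prop :=
  (∀ q', act dhi q' → ∃ q, act dlo q ∧ AlmSub (dhi q') (dlo q) ∧ q < q') ∧
  (∀ q r, act dlo q → q < r → ∃ q', act dhi q' ∧ AlmSub (dhi q') (dlo q) ∧ q < q' ∧ q' < r)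

/-- dependent choice along ℕ -/
theorem dependentChoice {α : Type*} (P : ℕ → α → Prop) (R : ℕ → α → α → Prop)
    (h0 : ∃ a, P 0 a) (hstep : ∀ n a, P n a → ∃ b, P (n+1) b ∧ R n a b) :
    ∃ c : ℕ → α, (∀ n, P n (c n)) ∧ (∀ n, R n (c n) (c (n+1))) := by
  classical
  let c' : ∀ n : ℕ, {a : α // P n a} :=
    Nat.rec ⟨Classical.choose h0, Classical.choose_spec h0⟩
      (fun n cn => ⟨Classical.choose (hstep n cn.1 cn.2),
        (Classical.choose_spec (hstep n cn.1 cn.2)).1⟩)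
  refine ⟨fun n => (c' n).1, fun n => (c' n).2, fun n => ?_⟩
  exact (Classical.choose_spec (hstep n (c' n).1 (c' n).2)).2

section Ext

variable (β : ι) (L : ∀ γ : ι, γ < β → Lv)
variable (hOK : ∀ γ h, LevelOK (L γ h))
variable (hB : ∀ γ1 h1 γ2 h2, γ1 < γ2 → Below (L γ1 h1) (L γ2 h2))

include hB in
/-- key lemma: solving one task -/
theorem key_lemma (hne : ∃ γ0 : ι, γ0 < β)
    (γ : ι) (hγ : γ < β) (q r : ℚ) (hq : act (L γ hγ) q) (hqr : q < r) :
    ∃ (B : Set ℕ) (s : ℚ), B.Infinite ∧ AlmSub B (L γ hγ q) ∧ q < s ∧ s < r ∧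
      (∀ γ' (h' : γ' < β), ∃ q', act (L γ' h') q' ∧ AlmSub B (L γ' h' q') ∧ q' < s) := by
  classical
  by_cases hmax : ∃ γ0 : ι, ∃ h0 : γ0 < β, ∀ γ' : ι, γ' < β → γ' ≤ γ0
  · -- successor-like case
    obtain ⟨γ0, h0, hm⟩ := hmax
    rcases eq_or_lt_of_le (hm γ hγ) with heq | hlt
    · -- γ = γ0
      subst heq
      refine ⟨L γ hγ q, (q+r)/2, hq, AlmSub.of_subset (le_refl _), by linarith, by linarith, ?_⟩
      intro γ' h'
      rcases eq_or_lt_of_le (hm γ' h') with heq' | hlt'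
      · subst heq'
        exact ⟨q, hq, AlmSub.of_subset (le_refl _), by linarith⟩
      · obtain ⟨q', hq'act, hq'sub, hq'lt⟩ := (hB γ' h' γ hγ hlt').1 q hq
        exact ⟨q', hq'act, hq'sub, by linarith⟩
    · -- γ < γ0
      obtain ⟨qs, hqsact, hqssub, hqlt1, hqlt2⟩ :=
        (hB γ hγ γ0 h0 hlt).2 q ((q+r)/2) hq (by linarith)
      refine ⟨L γ0 h0 qs, (q+r)/2, hqsact, hqssub, by linarith, by linarith, ?_⟩
      intro γ' h'
      rcases eq_or_lt_of_le (hm γ' h') with heq' | hlt'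
      · subst heq'
        exact ⟨qs, hqsact, AlmSub.of_subset (le_refl _), hqlt2⟩
      · obtain ⟨q', hq'act, hq'sub, hq'lt⟩ := (hB γ' h' γ0 h0 hlt').1 qs hqsact
        exact ⟨q', hq'act, hq'sub, by linarith⟩
  · -- limit case
    push_neg at hmax
    haveI : Countable {γ' : ι // γ' < β} := countable_Iio β
    haveI : Nonempty {γ' : ι // γ' < β} := ⟨⟨hne.choose, hne.choose_spec⟩⟩
    obtain ⟨e, he⟩ := exists_surjective_nat {γ' : ι // γ' < β}
    -- ladder
    obtain ⟨b, hbP, hbS⟩ := dependentChoice (α := {γ' : ι // γ' < β})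
      (P := fun j p => j = 0 → p = e 0)
      (R := fun j p p' => p.1 < p'.1 ∧ (e (j+1)).1 < p'.1)
      ⟨e 0, fun _ => rfl⟩
      (fun j p _ => by
        obtain ⟨γ'', hg1, hg2⟩ := hmax (max p.1 (e (j+1)).1)
          (max_lt_iff.2 ⟨p.2, (e (j+1)).2⟩)
        exact ⟨⟨γ'', hg1⟩, fun h => absurd h (Nat.succ_ne_zero j), lt_of_le_of_lt (le_max_left _ _) hg2,
          lt_of_le_of_lt (le_max_right _ _) hg2⟩)
    have hbmono : StrictMono (fun j => (b j).1) :=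
      strictMono_nat_of_lt_succ (fun j => (hbS j).1)
    have hcof : ∀ γ' : ι, γ' < β → ∃ j, γ' < (b j).1 := by
      intro γ' h'
      obtain ⟨k, hk⟩ := he ⟨γ', h'⟩
      cases k with
      | zero =>
        refine ⟨1, ?_⟩
        have h1 := (hbS 0).1
        rw [hbP 0 rfl, hk] at h1
        exact h1
      | succ k' =>
        refine ⟨k'+1, ?_⟩
        have h1 := (hbS k').2
        rw [hk] at h1; exact h1
    obtain ⟨j0, hj0⟩ := hcof γ hγ
    set s1 : ℚ := q + (r - q)/3 with hs1
    set s2 : ℚ := q + 2*(r - q)/3 with hs2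
    have hq1 : q < s1 := by rw [hs1]; linarith
    have h12 : s1 < s2 := by rw [hs1, hs2]; linarith
    have h2r : s2 < r := by rw [hs2]; linarith
    -- chain of active labels along the ladder
    obtain ⟨c, hcP, hcR⟩ := dependentChoice (α := ℚ)
      (P := fun i p => act (L (b (j0+i)).1 (b (j0+i)).2) p ∧ p < s2 ∧
        (i = 0 → AlmSub (L (b (j0+i)).1 (b (j0+i)).2 p) (L γ hγ q) ∧ q < p))
      (R := fun i p p' =>
        AlmSub (L (b (j0+i+1)).1 (b (j0+i+1)).2 p') (L (b (j0+i)).1 (b (j0+i)).2 p))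
      (by
        obtain ⟨q', h1, h2, h3, h4⟩ := (hB γ hγ (b j0).1 (b j0).2 hj0).2 q s1 hq hq1
        exact ⟨q', by simpa using h1, lt_trans h4 h12, fun _ => ⟨by simpa using h2, h3⟩⟩)
      (fun i p hp => by
        obtain ⟨q', h1, h2, h3, h4⟩ :=
          (hB (b (j0+i)).1 (b (j0+i)).2 (b (j0+i+1)).1 (b (j0+i+1)).2 ((hbS (j0+i)).1)).2
            p s2 hp.1 hp.2.1
        exact ⟨q', ⟨h1, h4, fun h => absurd h (Nat.succ_ne_zero i)⟩, h2⟩)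
    set F : ℕ → Set ℕ := fun i => L (b (j0+i)).1 (b (j0+i)).2 (c i) with hFdef
    obtain ⟨B, hBinf, hBsub⟩ := exists_pseudo_intersection F
      (fun i => (hcP i).1) (fun i => hcR i)
    refine ⟨B, s2, hBinf, ?_, lt_trans hq1 h12, h2r, ?_⟩
    · exact (hBsub 0).trans ((hcP 0).2.2 rfl).1
    · intro γ' h'
      obtain ⟨j1, hj1⟩ := hcof γ' h'
      have hj1' : γ' < (b (j0 + j1)).1 :=
        lt_of_lt_of_le hj1 (hbmono.monotone (Nat.le_add_left j1 j0))
      obtain ⟨q', hq'act, hq'sub, hq'lt⟩ :=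
        (hB γ' h' (b (j0+j1)).1 (b (j0+j1)).2 hj1').1 (c j1) (hcP j1).1
      exact ⟨q', hq'act, (hBsub j1).trans hq'sub, lt_trans hq'lt (hcP j1).2.1⟩

end Ext

section Ext2

variable (β : ι) (L : ∀ γ : ι, γ < β → Lv)
variable (hOK : ∀ γ h, LevelOK (L γ h))
variable (hB : ∀ γ1 h1 γ2 h2, γ1 < γ2 → Below (L γ1 h1) (L γ2 h2))

include hOK hB in
theorem ext_lemma : ∃ d : Lv, LevelOK d ∧ ∀ γ (h : γ < β), Below (L γ h) d := by
  classical
  by_cases hne : ∃ γ0 : ι, γ0 < β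
  · -- there is a lower level: use tasks
    set T := {t : {γ' : ι // γ' < β} × ℚ × ℚ // act (L t.1.1 t.1.2) t.2.1 ∧ t.2.1 < t.2.2}
      with hT
    haveI : Countable {γ' : ι // γ' < β} := countable_Iio β
    haveI : Countable T := inferInstance
    haveI : Nonempty T := by
      obtain ⟨γ0, h0⟩ := hne
      obtain ⟨q0, hq0⟩ := (hOK γ0 h0).2
      exact ⟨⟨(⟨γ0, h0⟩, (q0, q0+1)), hq0, lt_add_one q0⟩⟩
    obtain ⟨e, he⟩ := exists_surjective_nat T
    have hsolve : ∀ m : ℕ, ∃ (B : Set ℕ) (s : ℚ), B.Infinite ∧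
        AlmSub B (L (e m).1.1.1 (e m).1.1.2 (e m).1.2.1) ∧ (e m).1.2.1 < s ∧
        s < (e m).1.2.2 ∧
        (∀ γ' (h' : γ' < β), ∃ q', act (L γ' h') q' ∧ AlmSub B (L γ' h' q') ∧ q' < s) :=
      fun m => key_lemma β L hB hne (e m).1.1.1 (e m).1.1.2 (e m).1.2.1 (e m).1.2.2
        (e m).2.1 (e m).2.2
    set B : ℕ → Set ℕ := fun m => (hsolve m).choose with hBdef
    set s : ℕ → ℚ := fun m => (hsolve m).choose_spec.choose with hsdef
    have hBspec : ∀ m, (B m).Infinite ∧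
        AlmSub (B m) (L (e m).1.1.1 (e m).1.1.2 (e m).1.2.1) ∧ (e m).1.2.1 < s m ∧
        s m < (e m).1.2.2 ∧
        (∀ γ' (h' : γ' < β), ∃ q', act (L γ' h') q' ∧ AlmSub (B m) (L γ' h' q') ∧ q' < s m) :=
      fun m => (hsolve m).choose_spec.choose_spec
    obtain ⟨C, hCsub, hCinf, hCdisj⟩ := exists_disjoint_refinement B (fun m => (hBspec m).1)
    obtain ⟨f, hfinj, hfIoo⟩ := exists_injective_rationals (fun m => (s m, (e m).1.2.2))
      (fun m => (hBspec m).2.2.2.1)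
    set d : Lv := fun qq => if h : ∃ m, f m = qq then C (Classical.choose h) else ∅ with hd
    have hd_eq : ∀ m, d (f m) = C m := by
      intro m
      have hex : ∃ m', f m' = f m := ⟨m, rfl⟩
      show (if h : ∃ m', f m' = f m then C (Classical.choose h) else ∅) = C m
      rw [dif_pos hex]
      exact congrArg C (hfinj (Classical.choose_spec hex))
    have hd_act : ∀ m, act d (f m) := fun m => by rw [act, hd_eq m]; exact hCinf m
    have hd_inact : ∀ qq, (¬ ∃ m, f m = qq) → d qq = ∅ := fun qq h => by
      show (if h : ∃ m, f m = qq then C (Classical.choose h) else ∅) = ∅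
      rw [dif_neg h]
    refine ⟨d, ⟨?_, ⟨f 0, hd_act 0⟩⟩, ?_⟩
    · -- almost disjoint
      intro qq qq' hne'
      by_cases h1 : ∃ m, f m = qq
      · by_cases h2 : ∃ m', f m' = qq'
        · obtain ⟨m, hm⟩ := h1
          obtain ⟨m', hm'⟩ := h2
          rw [← hm, ← hm', hd_eq m, hd_eq m']
          have hmm : m ≠ m' := by
            intro h; apply hne'; rw [← hm, ← hm', h]
          rw [hCdisj m m' hmm]
          exact Set.finite_empty
        · rw [hd_inact qq' h2]
          simp
      · rw [hd_inact qq h1]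
        simp
    · -- Below
      intro γ h
      constructor
      · intro qq hact
        by_cases h1 : ∃ m, f m = qq
        · obtain ⟨m, hm⟩ := h1
          obtain ⟨q', hq'act, hq'sub, hq'lt⟩ := (hBspec m).2.2.2.2 γ h
          refine ⟨q', hq'act, ?_, ?_⟩
          · rw [← hm, hd_eq m]
            exact (AlmSub.of_subset (hCsub m)).trans hq'sub
          · rw [← hm]
            exact lt_trans hq'lt (hfIoo m).1
        · rw [act, hd_inact qq h1] at hact
          exact absurd hact (by simp [Set.Infinite])
      · intro q r hact hqr
        obtain ⟨m, hm⟩ := he ⟨(⟨γ, h⟩, (q, r)), hact, hqr⟩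
        have h1 : (e m).1.1.1 = γ := by rw [hm]
        have h2 : (e m).1.2.1 = q := by rw [hm]
        have h3 : (e m).1.2.2 = r := by rw [hm]
        refine ⟨f m, hd_act m, ?_, ?_, ?_⟩
        · rw [hd_eq m]
          refine (AlmSub.of_subset (hCsub m)).trans ?_
          have := (hBspec m).2.1
          rw [hm] at this
          exact this
        · have h4 := (hBspec m).2.2.1
          rw [h2] at h4
          exact lt_trans h4 (hfIoo m).1
        · have h4 := (hfIoo m).2
          rwa [h3] at h4
  · -- base case
    refine ⟨fun q => if q = 0 then Set.univ else ∅, ⟨?_, ⟨0, ?_⟩⟩, ?_⟩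
    · intro q q' hqq
      show ((if q = 0 then (Set.univ : Set ℕ) else ∅) ∩
        (if q' = 0 then (Set.univ : Set ℕ) else ∅)).Finite
      by_cases h : q = 0
      · have h' : ¬ (q' = 0) := fun hh => hqq (by rw [h, hh])
        rw [if_neg h']
        simp
      · rw [if_neg h]
        simp
    · show ((fun q => if q = 0 then (Set.univ : Set ℕ) else ∅) (0:ℚ)).Infinite
      show (if (0:ℚ) = 0 then (Set.univ : Set ℕ) else ∅).Infinite
      rw [if_pos rfl]
      exact Set.infinite_univ
    · intro γ h
      exact absurd ⟨γ, h⟩ hne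

end Ext2

open Classical in
noncomputable def stepF : ∀ (β : ι), (∀ γ : ι, γ < β → Lv) → Lv := fun β IH =>
  if h : (∀ γ hh, LevelOK (IH γ hh)) ∧
      (∀ γ1 h1 γ2 h2, γ1 < γ2 → Below (IH γ1 h1) (IH γ2 h2))
  then Classical.choose (ext_lemma β IH h.1 h.2) else (fun _ => ∅)

noncomputable def levels : ι → Lv :=
  IsWellFounded.fix (α := ι) (· < ·) stepF

theorem levels_good : ∀ β : ι, LevelOK (levels β) ∧
    ∀ γ (h : γ < β), Below (levels γ) (levels β) := by
  refine IsWellFounded.fix (α := ι) (· < ·) ?_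
  intro β IH
  have hfix : levels β = stepF β (fun γ _ => levels γ) :=
    IsWellFounded.fix_eq (α := ι) (· < ·) stepF β
  have hcond : (∀ γ (hh : γ < β), LevelOK ((fun γ _ => levels γ) γ hh)) ∧
      (∀ γ1 (h1 : γ1 < β) γ2 (h2 : γ2 < β), γ1 < γ2 →
        Below ((fun (γ : ι) (_ : γ < β) => levels γ) γ1 h1)
          ((fun (γ : ι) (_ : γ < β) => levels γ) γ2 h2)) := by
    constructor
    · intro γ hh; exact (IH γ hh).1
    · intro γ1 h1 γ2 h2 h12; exact (IH γ2 h2).2 γ1 h12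
  have hspec := Classical.choose_spec (ext_lemma β (fun γ _ => levels γ) hcond.1 hcond.2)
  have hfix2 : levels β = Classical.choose (ext_lemma β (fun γ _ => levels γ) hcond.1 hcond.2) := by
    rw [hfix]
    unfold stepF
    rw [dif_pos hcond]
  constructor
  · rw [hfix2]
    exact hspec.1
  · intro γ h
    rw [hfix2]
    exact hspec.2 γ h

theorem levels_ok (β : ι) : LevelOK (levels β) := (levels_good β).1

theorem levels_below {γ β : ι} (h : γ < β) : Below (levels γ) (levels β) :=
  (levels_good β).2 γ h

/-- no ω₁-thread of pairwise-infinitely-intersecting fibers -/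
theorem no_thread (K : ι → ℚ) (hact : ∀ β, act (levels β) (K β))
    (hint : ∀ β β', β < β' → ((levels β (K β)) ∩ (levels β' (K β'))).Infinite) : False := by
  have hmono : StrictMono K := by
    intro β β' hββ
    obtain ⟨q, hqact, hqsub, hqlt⟩ := (levels_below hββ).1 (K β') (hact β')
    have h1 : ((levels β (K β)) ∩ (levels β q)).Infinite := by
      have h2 := hint β β' hββ
      have h3 : ((levels β (K β)) ∩ (levels β' (K β'))) \ (levels β q) ⊆
          (levels β' (K β')) \ (levels β q) := by
        intro x hx; exact ⟨hx.1.2, hx.2⟩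
      have h4 : (((levels β (K β)) ∩ (levels β' (K β'))) \ (levels β q)).Finite :=
        Set.Finite.subset hqsub h3
      have h5 := h2.diff h4
      refine Set.Infinite.mono ?_ h5
      intro x hx
      have hx1 := hx.1
      have hx2 := hx.2
      simp only [Set.mem_diff, Set.mem_inter_iff, not_and, not_not] at hx2 ⊢
      exact ⟨hx1.1, by
        by_contra hq
        exact hq (hx2 hx1)⟩
    have : K β = q := by
      by_contra hne
      exact h1 ((levels_ok β).1 (K β) q hne)
    rw [this]
    exact hqlt
  haveI : Countable ι := (hmono.injective).countable
  haveI := uncountable_ι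
  exact (not_countable (α := ι)) inferInstance

-- Section 5: the points
noncomputable def codeQ : ℚ ≃ ℕ := Denumerable.eqv ℚ

/-- fiber of code `k` at level `β` -/
noncomputable def fibOf (β : ι) (k : ℕ) : Set ℕ := levels β (codeQ.symm k)

def assigned (β : ι) (m : ℕ) : Prop := ∃ k, m ∈ fibOf β k

noncomputable def kOf (β : ι) (m : ℕ) : ℕ := sInf {k | m ∈ fibOf β k}

noncomputable def rankOf (β : ι) (m : ℕ) : ℕ := ((fibOf β (kOf β m)) ∩ Set.Iio m).ncard

open Classical in
noncomputable def xval (n : ℕ) (β : ι) : ℝ :=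
  if assigned β (n/2)
  then (kOf β (n/2) : ℝ) + 1/(2*(rankOf β (n/2) : ℝ) + 2 + (n % 2 : ℕ))
  else -(3 + (n : ℝ))

noncomputable def xx : ℕ → (ι → ℝ) := fun n β => xval n β

theorem kOf_mem {β : ι} {m : ℕ} (h : assigned β m) : m ∈ fibOf β (kOf β m) :=
  Nat.sInf_mem h

theorem xval_assigned {n : ℕ} {β : ι} (h : assigned β (n/2)) :
    xval n β = (kOf β (n/2) : ℝ) + 1/(2*(rankOf β (n/2) : ℝ) + 2 + (n % 2 : ℕ)) := by
  rw [xval, if_pos h]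

theorem xval_junk {n : ℕ} {β : ι} (h : ¬ assigned β (n/2)) :
    xval n β = -(3 + (n : ℝ)) := by
  rw [xval, if_neg h]

/-- structure of assigned values -/
theorem xval_bounds {n : ℕ} {β : ι} (h : assigned β (n/2)) :
    (kOf β (n/2) : ℝ) < xval n β ∧ xval n β ≤ (kOf β (n/2) : ℝ) + 1/2 := by
  rw [xval_assigned h]
  have h1 : (0:ℝ) < 2*(rankOf β (n/2) : ℝ) + 2 + (n % 2 : ℕ) := by
    have : (0:ℝ) ≤ (rankOf β (n/2) : ℝ) := Nat.cast_nonneg _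
    have : (0:ℝ) ≤ ((n % 2 : ℕ) : ℝ) := Nat.cast_nonneg _
    linarith
  have h2 : (2:ℝ) ≤ 2*(rankOf β (n/2) : ℝ) + 2 + (n % 2 : ℕ) := by
    have : (0:ℝ) ≤ (rankOf β (n/2) : ℝ) := Nat.cast_nonneg _
    have : (0:ℝ) ≤ ((n % 2 : ℕ) : ℝ) := Nat.cast_nonneg _
    linarith
  constructor
  · have : (0:ℝ) < 1/(2*(rankOf β (n/2) : ℝ) + 2 + (n % 2 : ℕ)) := by positivity
    linarith
  · have : 1/(2*(rankOf β (n/2) : ℝ) + 2 + (n % 2 : ℕ)) ≤ 1/2 := by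
      apply one_div_le_one_div_of_le
      · norm_num
      · exact h2
    linarith

/-- the reciprocal part determines `(rank, parity)` -/
theorem xval_eq_parts {n n' : ℕ} {β : ι} (h : assigned β (n/2)) (h' : assigned β (n'/2))
    (hk : kOf β (n/2) = kOf β (n'/2)) (he : xval n β = xval n' β) :
    rankOf β (n/2) = rankOf β (n'/2) ∧ n % 2 = n' % 2 := by
  rw [xval_assigned h, xval_assigned h', hk] at he
  have he2 : (1:ℝ)/(2*(rankOf β (n/2) : ℝ) + 2 + (n % 2 : ℕ)) =
      1/(2*(rankOf β (n'/2) : ℝ) + 2 + (n' % 2 : ℕ)) := by linarith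
  have hpos : (0:ℝ) < 2*(rankOf β (n/2) : ℝ) + 2 + (n % 2 : ℕ) := by positivity
  have hpos' : (0:ℝ) < 2*(rankOf β (n'/2) : ℝ) + 2 + (n' % 2 : ℕ) := by positivity
  have he3 : 2*(rankOf β (n/2) : ℝ) + 2 + (n % 2 : ℕ) =
      2*(rankOf β (n'/2) : ℝ) + 2 + (n' % 2 : ℕ) := by
    field_simp at he2
    linarith
  have he4 : 2*(rankOf β (n/2)) + 2 + (n % 2) = 2*(rankOf β (n'/2)) + 2 + (n' % 2) := by
    exact_mod_cast he3
  have hp : n % 2 < 2 := Nat.mod_lt _ (by norm_num)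
  have hp' : n' % 2 < 2 := Nat.mod_lt _ (by norm_num)
  omega

/-- values pin down the integer part -/
theorem xval_k_window {n : ℕ} {β : ι} (h : assigned β (n/2)) {t : ℝ} (ht : |xval n β - t| < 1/5)
    {k : ℕ} (hkt : t = (k:ℝ)) : kOf β (n/2) = k := by
  obtain ⟨h1, h2⟩ := xval_bounds h
  rw [hkt, abs_lt] at ht
  have hlt : (kOf β (n/2) : ℝ) < (k:ℝ) + 1 := by linarith
  have hgt : (k:ℝ) < (kOf β (n/2) : ℝ) + 1 := by linarith
  have := (Nat.cast_lt (α := ℝ)).1 (by exact_mod_cast hlt : (kOf β (n/2) : ℝ) < ((k+1 : ℕ) : ℝ))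
  have := (Nat.cast_lt (α := ℝ)).1 (by exact_mod_cast hgt : (k : ℝ) < ((kOf β (n/2) + 1 : ℕ) : ℝ))
  omega

theorem rank_strictMono {β : ι} {k : ℕ} {m m' : ℕ} (hm : m ∈ fibOf β k) (hm' : m' ∈ fibOf β k)
    (hr : ((fibOf β k) ∩ Set.Iio m).ncard = ((fibOf β k) ∩ Set.Iio m').ncard) : m = m' := by
  by_contra hne
  rcases Nat.lt_or_ge m m' with hlt | hge
  · have hsub : (fibOf β k) ∩ Set.Iio m ⊂ (fibOf β k) ∩ Set.Iio m' := by
      constructor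
      · intro z hz; exact ⟨hz.1, lt_trans hz.2 hlt⟩
      · intro hcon
        have := hcon ⟨hm, hlt⟩
        exact absurd this.2 (lt_irrefl m)
    have hfin : ((fibOf β k) ∩ Set.Iio m').Finite :=
      Set.Finite.subset (Set.finite_Iio m') (Set.inter_subset_right)
    have := Set.ncard_lt_ncard hsub hfin
    omega
  · have hlt : m' < m := by omega
    have hsub : (fibOf β k) ∩ Set.Iio m' ⊂ (fibOf β k) ∩ Set.Iio m := by
      constructor
      · intro z hz; exact ⟨hz.1, lt_trans hz.2 hlt⟩
      · intro hcon
        have := hcon ⟨hm', hlt⟩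
        exact absurd this.2 (lt_irrefl m')
    have hfin : ((fibOf β k) ∩ Set.Iio m).Finite :=
      Set.Finite.subset (Set.finite_Iio m) (Set.inter_subset_right)
    have := Set.ncard_lt_ncard hsub hfin
    omega

theorem xx_injective : Function.Injective xx := by
  intro n n' he
  have heβ : ∀ β, xval n β = xval n' β := fun β => congrFun he β
  -- work at an arbitrary level, say any β
  obtain ⟨β⟩ : Nonempty ι := ⟨⟨0, Ordinal.omega_pos 1⟩⟩
  have h := heβ β
  by_cases h1 : assigned β (n/2)
  · by_cases h2 : assigned β (n'/2)
    · -- both assigned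
      have hk : kOf β (n/2) = kOf β (n'/2) := by
        have b1 := xval_bounds h1
        have b2 := xval_bounds h2
        rw [h] at b1
        have hlt : (kOf β (n/2) : ℝ) < (kOf β (n'/2) : ℝ) + 1 := by linarith
        have hgt : (kOf β (n'/2) : ℝ) < (kOf β (n/2) : ℝ) + 1 := by linarith
        have c1 := (Nat.cast_lt (α := ℝ)).1
          (by exact_mod_cast hlt : (kOf β (n/2) : ℝ) < ((kOf β (n'/2) + 1 : ℕ) : ℝ))
        have c2 := (Nat.cast_lt (α := ℝ)).1
          (by exact_mod_cast hgt : (kOf β (n'/2) : ℝ) < ((kOf β (n/2) + 1 : ℕ) : ℝ))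
        omega
      obtain ⟨hr, hp⟩ := xval_eq_parts h1 h2 hk h
      have hmem := kOf_mem h1
      have hmem' := kOf_mem h2
      rw [hk] at hmem
      have hm : n/2 = n'/2 := by
        apply rank_strictMono hmem hmem'
        simp only [rankOf] at hr
        rw [hk] at hr
        exact hr
      omega
    · -- n assigned, n' junk: impossible
      rw [xval_junk h2] at h
      have b1 := (xval_bounds h1).1
      have : (0:ℝ) ≤ (kOf β (n/2) : ℝ) := Nat.cast_nonneg _
      have : (0:ℝ) ≤ (n' : ℝ) := Nat.cast_nonneg _
      linarith
  · by_cases h2 : assigned β (n'/2)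
    · rw [xval_junk h1] at h
      have b2 := (xval_bounds h2).1
      have : (0:ℝ) ≤ (kOf β (n'/2) : ℝ) := Nat.cast_nonneg _
      have : (0:ℝ) ≤ (n : ℝ) := Nat.cast_nonneg _
      linarith
    · rw [xval_junk h1, xval_junk h2] at h
      have : (n:ℝ) = (n':ℝ) := by linarith
      exact_mod_cast this

-- Section 6: the catcher lemma (no accumulation points)

@[simp] theorem xx_apply (n : ℕ) (β : ι) : xx n β = xval n β := rfl

theorem finite_of_half {A : Set ℕ} (hA : A.Finite) : {n : ℕ | n/2 ∈ A}.Finite := by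
  have hsub : {n : ℕ | n/2 ∈ A} ⊆ ((fun m => 2*m) '' A) ∪ ((fun m => 2*m+1) '' A) := by
    intro n hn
    rcases Nat.even_or_odd n with he | ho
    · exact Or.inl ⟨n/2, hn, by show 2*(n/2) = n; obtain ⟨c, hc⟩ := he; omega⟩
    · exact Or.inr ⟨n/2, hn, by show 2*(n/2)+1 = n; obtain ⟨c, hc⟩ := ho; omega⟩
  exact Set.Finite.subset ((hA.image _).union (hA.image _)) hsub

/-- the set of fiber elements of bounded rank is finite -/
theorem finite_small_rank (β : ι) (k J : ℕ) :
    {m : ℕ | m ∈ fibOf β k ∧ ((fibOf β k) ∩ Set.Iio m).ncard ≤ J}.Finite := by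
  by_contra hinf
  rw [← Set.not_infinite, not_not] at hinf
  have hinj : Set.InjOn (fun m => ((fibOf β k) ∩ Set.Iio m).ncard)
      {m : ℕ | m ∈ fibOf β k ∧ ((fibOf β k) ∩ Set.Iio m).ncard ≤ J} :=
    fun a ha b hb hab => rank_strictMono ha.1 hb.1 hab
  have himg : (fun m => ((fibOf β k) ∩ Set.Iio m).ncard) ''
      {m : ℕ | m ∈ fibOf β k ∧ ((fibOf β k) ∩ Set.Iio m).ncard ≤ J} ⊆ Set.Iic J := by
    rintro z ⟨m, hm, rfl⟩
    exact hm.2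
  exact hinf (Set.Finite.of_finite_image (Set.Finite.subset (Set.finite_Iic J) himg) hinj)

theorem catcher (y : ι → ℝ) : ∃ (F : Finset ι) (ε : ℝ), 0 < ε ∧
    {n : ℕ | ∀ β ∈ F, |xx n β - y β| < ε}.Finite := by
  classical
  by_contra hcon
  push_neg at hcon
  have hcon' : ∀ (F : Finset ι) (ε : ℝ), 0 < ε →
      {n : ℕ | ∀ β ∈ F, |xx n β - y β| < ε}.Infinite := fun F ε hε => hcon F ε hε
  have stepA : ∀ β : ι, ∃ k : ℕ, y β = (k:ℝ) ∧ (fibOf β k).Infinite := by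
    intro β
    have hS : ∀ δ : ℝ, 0 < δ → {n : ℕ | |xval n β - y β| < δ}.Infinite := by
      intro δ hδ
      refine (hcon' {β} δ hδ).mono ?_
      intro n hn
      have := hn β (Finset.mem_singleton_self β)
      rwa [xx_apply] at this
    have hjunk : ∀ δ : ℝ, 0 < δ →
        {n : ℕ | ¬ assigned β (n/2) ∧ |xval n β - y β| < δ}.Finite := by
      intro δ hδ
      obtain ⟨N, hN⟩ := exists_nat_gt (δ - 3 - y β)
      refine Set.Finite.subset (Set.finite_Iio N) ?_
      intro n hn
      rw [Set.mem_setOf_eq] at hn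
      have h2 := hn.2
      rw [xval_junk hn.1, abs_lt] at h2
      have h3 : (n:ℝ) < δ - 3 - y β := by linarith [h2.1]
      have h4 : (n:ℝ) < (N:ℝ) := lt_trans h3 hN
      exact Set.mem_Iio.2 (by exact_mod_cast h4)
    have hassigned : ∀ δ : ℝ, 0 < δ →
        {n : ℕ | assigned β (n/2) ∧ |xval n β - y β| < δ}.Infinite := by
      intro δ hδ
      refine Set.Infinite.mono ?_ ((hS δ hδ).diff (hjunk δ hδ))
      intro n hn
      refine ⟨?_, hn.1⟩
      by_contra hna
      exact hn.2 ⟨hna, hn.1⟩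
    obtain ⟨n₀, hn₀⟩ := (hassigned (1/5) (by norm_num)).nonempty
    set k := kOf β (n₀/2) with hkdef
    have huniq : ∀ n : ℕ, assigned β (n/2) → |xval n β - y β| < 1/5 → kOf β (n/2) = k := by
      intro n h1 h2
      have b0 := xval_bounds hn₀.1
      have b1 := xval_bounds h1
      have e0 := abs_lt.1 hn₀.2
      have e1 := abs_lt.1 h2
      have hlt : (kOf β (n/2) : ℝ) < (k : ℝ) + 1 := by
        rw [hkdef]
        linarith [b0.1, b0.2, b1.1, b1.2, e0.1, e0.2, e1.1, e1.2]
      have hgt : (k : ℝ) < (kOf β (n/2) : ℝ) + 1 := by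
        rw [hkdef]
        linarith [b0.1, b0.2, b1.1, b1.2, e0.1, e0.2, e1.1, e1.2]
      have c1 : kOf β (n/2) < k + 1 := by exact_mod_cast hlt
      have c2 : k < kOf β (n/2) + 1 := by exact_mod_cast hgt
      omega
    have hyk : y β = (k:ℝ) := by
      by_contra hne
      rcases lt_or_gt_of_ne hne with hlt | hgt
      · -- y β < k
        have hδpos : (0:ℝ) < min ((k:ℝ) - y β) (1/5) := lt_min (by linarith) (by norm_num)
        obtain ⟨n, hn⟩ := (hassigned _ hδpos).nonempty
        have hk' := huniq n hn.1 (lt_of_lt_of_le hn.2 (min_le_right _ _))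
        have hb := (xval_bounds hn.1).1
        rw [hk'] at hb
        have habs := lt_of_abs_lt hn.2
        have hmin := min_le_left ((k:ℝ) - y β) (1/5)
        linarith
      · -- y β > k
        have hcpos : (0:ℝ) < y β - (k:ℝ) := by linarith
        have hδpos : (0:ℝ) < min ((y β - (k:ℝ))/2) (1/5) := lt_min (by linarith) (by norm_num)
        refine (hassigned _ hδpos) ?_
        obtain ⟨J, hJ⟩ := exists_nat_gt (2/(y β - (k:ℝ)))
        refine Set.Finite.subset (finite_of_half (finite_small_rank β k J)) ?_
        intro n hn
        have hk' := huniq n hn.1 (lt_of_lt_of_le hn.2 (min_le_right _ _))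
        have hmem := kOf_mem hn.1
        rw [hk'] at hmem
        refine Set.mem_setOf_eq ▸ ⟨hmem, ?_⟩
        -- the value is close to y β, far above k
        have h5 := (abs_lt.1 hn.2).1
        have h6 : min ((y β - (k:ℝ))/2) (1/5) ≤ (y β - (k:ℝ))/2 := min_le_left _ _
        have hlow : (y β - (k:ℝ))/2 < xval n β - (k:ℝ) := by linarith
        rw [xval_assigned hn.1, hk'] at hlow
        have hlow2 : (y β - (k:ℝ))/2 < 1/(2*(rankOf β (n/2) : ℝ) + 2 + (n % 2 : ℕ)) := by
          linarith
        have hD : (0:ℝ) < 2*(rankOf β (n/2) : ℝ) + 2 + (n % 2 : ℕ) := by positivity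
        have hDlt : 2*(rankOf β (n/2) : ℝ) + 2 + (n % 2 : ℕ) < 2/(y β - (k:ℝ)) := by
          have h8 : (2*(rankOf β (n/2) : ℝ) + 2 + (n % 2 : ℕ)) * ((y β - (k:ℝ))/2) <
              (2*(rankOf β (n/2) : ℝ) + 2 + (n % 2 : ℕ)) * (1/(2*(rankOf β (n/2) : ℝ) + 2 + (n % 2 : ℕ))) :=
            mul_lt_mul_of_pos_left hlow2 hD
          rw [mul_one_div_cancel (ne_of_gt hD)] at h8
          rw [lt_div_iff₀ hcpos]
          linarith
        have hDJ : 2*(rankOf β (n/2) : ℝ) + 2 + (n % 2 : ℕ) < (J:ℝ) := lt_trans hDlt hJ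
        have hcast : 2*(rankOf β (n/2)) + 2 + (n % 2) < J := by exact_mod_cast hDJ
        have hrank : rankOf β (n/2) ≤ J := by omega
        rw [rankOf, hk'] at hrank
        exact hrank
    have hfib : (fibOf β k).Infinite := by
      by_contra hfin
      rw [Set.not_infinite] at hfin
      refine (hassigned (1/5) (by norm_num)) ?_
      refine Set.Finite.subset (finite_of_half hfin) ?_
      intro n hn
      have hk' := huniq n hn.1 hn.2
      have hmem := kOf_mem hn.1
      rw [hk'] at hmem
      exact hmem
    exact ⟨k, hyk, hfib⟩
  -- Step B: thread and death
  set kf : ι → ℕ := fun β => (stepA β).choose with hkf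
  have hkf1 : ∀ β, y β = (kf β : ℝ) := fun β => (stepA β).choose_spec.1
  have hkf2 : ∀ β, (fibOf β (kf β)).Infinite := fun β => (stepA β).choose_spec.2
  set K : ι → ℚ := fun β => codeQ.symm (kf β) with hK
  have hKact : ∀ β, act (levels β) (K β) := fun β => hkf2 β
  by_cases hpair : ∀ β β' : ι, β < β' → ((levels β (K β)) ∩ (levels β' (K β'))).Infinite
  · exact no_thread K hKact (fun β β' h => hpair β β' h)
  · push_neg at hpair
    obtain ⟨β, β', hββ, hfin⟩ := hpair
    refine (hcon' {β, β'} (1/5) (by norm_num)) ?_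
    refine Set.Finite.subset (finite_of_half hfin) ?_
    intro n hn
    have hnβ : |xval n β - y β| < 1/5 := by
      have := hn β (by simp)
      rwa [xx_apply] at this
    have hnβ' : |xval n β' - y β'| < 1/5 := by
      have := hn β' (by simp)
      rwa [xx_apply] at this
    have hassβ : assigned β (n/2) := by
      by_contra hna
      rw [xval_junk hna, hkf1 β, abs_lt] at hnβ
      have hc1 : (0:ℝ) ≤ (kf β : ℝ) := Nat.cast_nonneg _
      have hc2 : (0:ℝ) ≤ (n : ℝ) := Nat.cast_nonneg _
      linarith [hnβ.1]
    have hassβ' : assigned β' (n/2) := by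
      by_contra hna
      rw [xval_junk hna, hkf1 β', abs_lt] at hnβ'
      have hc1 : (0:ℝ) ≤ (kf β' : ℝ) := Nat.cast_nonneg _
      have hc2 : (0:ℝ) ≤ (n : ℝ) := Nat.cast_nonneg _
      linarith [hnβ'.1]
    have hkβ : kOf β (n/2) = kf β := xval_k_window hassβ hnβ (hkf1 β)
    have hkβ' : kOf β' (n/2) = kf β' := xval_k_window hassβ' hnβ' (hkf1 β')
    have hm1 := kOf_mem hassβ
    have hm2 := kOf_mem hassβ'
    rw [hkβ] at hm1
    rw [hkβ'] at hm2
    exact ⟨hm1, hm2⟩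

-- Section 7: topology of N

noncomputable def NN : Set (Omega1Index → ℝ) := Set.range xx

def box (y : ι → ℝ) (F : Finset ι) (ε : ℝ) : Set (ι → ℝ) :=
  {z : ι → ℝ | ∀ β ∈ F, |z β - y β| < ε}

theorem box_eq (y : ι → ℝ) (F : Finset ι) (ε : ℝ) :
    box y F ε = ⋂ β ∈ F, (fun z : ι → ℝ => z β) ⁻¹' Metric.ball (y β) ε := by
  ext z
  simp only [box, Set.mem_setOf_eq, Set.mem_iInter, Set.mem_preimage, Metric.mem_ball,
    Real.dist_eq]

theorem box_isOpen (y : ι → ℝ) (F : Finset ι) (ε : ℝ) : IsOpen (box y F ε) := by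
  rw [box_eq]
  refine isOpen_biInter_finset ?_
  intro β _
  exact (Metric.isOpen_ball).preimage (continuous_apply β)

theorem box_mem_nhds (y : ι → ℝ) (F : Finset ι) (ε : ℝ) (hε : 0 < ε) :
    box y F ε ∈ nhds y := by
  refine (box_isOpen y F ε).mem_nhds ?_
  intro β _
  simpa using hε

theorem box_of_nhds {p : ι → ℝ} {U : Set (ι → ℝ)} (hU : U ∈ nhds p) :
    ∃ (F : Finset ι) (ε : ℝ), 0 < ε ∧ box p F ε ⊆ U := by
  classical
  rw [nhds_pi, Filter.mem_pi] at hU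
  obtain ⟨I, hIfin, V, hV, hsub⟩ := hU
  have hball : ∀ i : ι, i ∈ I → ∃ δ : ℝ, 0 < δ ∧ Metric.ball (p i) δ ⊆ V i := by
    intro i _
    exact Metric.mem_nhds_iff.1 (hV i)
  choose! δ hδpos hδsub using hball
  set F := hIfin.toFinset with hF
  have hFI : ∀ i, i ∈ F ↔ i ∈ I := fun i => Set.Finite.mem_toFinset hIfin
  rcases Finset.eq_empty_or_nonempty F with hFe | hFne
  · refine ⟨∅, 1, by norm_num, ?_⟩
    intro z _
    apply hsub
    intro i hi
    exact absurd ((hFI i).2 hi) (by rw [hFe]; simp)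
  · set ε := F.inf' hFne δ with hε
    have hεpos : 0 < ε := by
      obtain ⟨i0, hi0, hi0e⟩ := Finset.exists_mem_eq_inf' hFne δ
      rw [hε, hi0e]
      exact hδpos i0 ((hFI i0).1 hi0)
    refine ⟨F, ε, hεpos, ?_⟩
    intro z hz
    apply hsub
    intro i hi
    have hiF : i ∈ F := (hFI i).2 hi
    have h1 : |z i - p i| < ε := hz i hiF
    have h2 : ε ≤ δ i := Finset.inf'_le δ hiF
    apply hδsub i hi
    rw [Metric.mem_ball, Real.dist_eq]
    linarith

theorem NN_separation (y : ι → ℝ) : ∃ (F : Finset ι) (ε : ℝ), 0 < ε ∧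
    ∀ n : ℕ, xx n ∈ box y F ε → xx n = y := by
  classical
  obtain ⟨F, ε, hε, hfin⟩ := catcher y
  set T := hfin.toFinset with hT
  have hTmem : ∀ n, n ∈ T ↔ ∀ β ∈ F, |xx n β - y β| < ε := fun n =>
    Set.Finite.mem_toFinset hfin
  -- separating data for bad n's
  have hsep : ∀ n : ℕ, xx n ≠ y → ∃ β : ι, xx n β ≠ y β := by
    intro n hne
    by_contra hno
    push_neg at hno
    exact hne (funext hno)
  set Tbad := T.filter (fun n => xx n ≠ y) with hTbad
  haveI : Nonempty ι := ⟨⟨0, Ordinal.omega_pos 1⟩⟩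
  choose! bt hbt using hsep
  set F' := F ∪ Tbad.image bt with hF'
  set m : ℝ := if h : Tbad.Nonempty
    then Tbad.inf' h (fun n => |xx n (bt n) - y (bt n)|) else 1 with hm
  have hbadpos : ∀ n ∈ Tbad, 0 < |xx n (bt n) - y (bt n)| := by
    intro n hn
    rw [hTbad, Finset.mem_filter] at hn
    exact abs_pos.2 (sub_ne_zero.2 (hbt n hn.2))
  have hmpos : 0 < m := by
    rw [hm]
    split_ifs with h
    · obtain ⟨i0, hi0, hi0e⟩ := Finset.exists_mem_eq_inf' h (fun n => |xx n (bt n) - y (bt n)|)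
      rw [hi0e]
      exact hbadpos i0 hi0
    · norm_num
  refine ⟨F', min ε m, lt_min hε hmpos, ?_⟩
  intro n hbox
  by_contra hne
  have hnT : n ∈ T := by
    rw [hTmem]
    intro β hβ
    have h1 : β ∈ F' := Finset.mem_union_left _ hβ
    have h2 := hbox β h1
    exact lt_of_lt_of_le h2 (min_le_left _ _)
  have hnTbad : n ∈ Tbad := by
    rw [hTbad, Finset.mem_filter]
    exact ⟨hnT, hne⟩
  have hbtF' : bt n ∈ F' := Finset.mem_union_right _ (Finset.mem_image_of_mem bt hnTbad)
  have h3 := hbox (bt n) hbtF'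
  have h4 : m ≤ |xx n (bt n) - y (bt n)| := by
    rw [hm]
    rw [dif_pos ⟨n, hnTbad⟩]
    exact Finset.inf'_le _ hnTbad
  have h5 := lt_of_lt_of_le h3 (min_le_right ε m)
  linarith

theorem NN_closed : IsClosed NN := by
  rw [← isOpen_compl_iff, isOpen_iff_mem_nhds]
  intro y hy
  obtain ⟨F, ε, hε, hsep⟩ := NN_separation y
  refine Filter.mem_of_superset (box_mem_nhds y F ε hε) ?_
  intro z hz
  intro hzN
  obtain ⟨n, rfl⟩ := hzN
  exact hy ⟨n, hsep n hz⟩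

theorem NN_isolated (n : ℕ) : ∃ U : Set (ι → ℝ), IsOpen U ∧ xx n ∈ U ∧
    ∀ n' : ℕ, xx n' ∈ U → xx n' = xx n := by
  obtain ⟨F, ε, hε, hsep⟩ := NN_separation (xx n)
  refine ⟨box (xx n) F ε, box_isOpen _ _ _, ?_, hsep⟩
  intro β _
  simpa using hε

theorem NN_discrete : DiscreteTopology NN := by
  rw [discreteTopology_iff_isOpen_singleton]
  rintro ⟨z, n, rfl⟩
  obtain ⟨U, hUopen, hUmem, hUsep⟩ := NN_isolated n
  have : ({⟨xx n, ⟨n, rfl⟩⟩} : Set NN) = (Subtype.val) ⁻¹' U := by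
    ext q
    simp only [Set.mem_singleton_iff, Set.mem_preimage]
    constructor
    · rintro rfl
      exact hUmem
    · intro hq
      obtain ⟨z', n', hn'⟩ := q
      have : xx n' = xx n := hUsep n' (by rwa [hn'])
      apply Subtype.ext
      simp only []
      rw [← hn', this]
    
  rw [this]
  exact hUopen.preimage continuous_subtype_val

theorem NN_countable : NN.Countable := Set.countable_range xx

theorem NN_infinite : NN.Infinite := Set.infinite_range_of_injective xx_injective

-- Section 8: the main argument

theorem finset_bound (F : Finset ι) : ∃ δ : ι, ∀ β ∈ F, β < δ := by
  rcases F.eq_empty_or_nonempty with h | h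
  · exact ⟨⟨0, Ordinal.omega_pos 1⟩, fun β hβ => absurd hβ (by rw [h]; simp)⟩
  · obtain ⟨δ, hδ⟩ := exists_gt (F.max' h)
    exact ⟨δ, fun β hβ => lt_of_le_of_lt (F.le_max' β hβ) hδ⟩

theorem eventually_avoid (S : Set ℕ) (hS : S.Finite) (u : ℕ → ℕ) (hu : StrictMono u) :
    ∃ i0, ∀ i ≥ i0, u i ∉ S := by
  obtain ⟨b, hb⟩ := hS.bddAbove
  refine ⟨b+1, fun i hi hmem => ?_⟩
  have h1 : u i ≤ b := hb hmem
  have h2 : i ≤ u i := hu.le_apply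
  omega

set_option maxHeartbeats 1000000 in
theorem main_noext : ¬ ∃ g : C((Omega1Index → ℝ), ℝ), ∀ n : ℕ, g (xx n) = (-1)^n := by
  classical
  rintro ⟨g, hg⟩
  -- Step 1: box control around each point
  have hcont : ∀ n : ℕ, g ⁻¹' Metric.ball (g (xx n)) (1/4) ∈ nhds (xx n) := fun n =>
    (g.continuous.continuousAt).preimage_mem_nhds (Metric.ball_mem_nhds _ (by norm_num))
  have hbox : ∀ n, ∃ (F : Finset ι) (ε : ℝ), 0 < ε ∧
      box (xx n) F ε ⊆ g ⁻¹' Metric.ball (g (xx n)) (1/4) := fun n => box_of_nhds (hcont n)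
  set Fn : ℕ → Finset ι := fun n => (hbox n).choose with hFn
  set εn : ℕ → ℝ := fun n => (hbox n).choose_spec.choose with hεn
  have hspec : ∀ n, 0 < εn n ∧
      box (xx n) (Fn n) (εn n) ⊆ g ⁻¹' Metric.ball (g (xx n)) (1/4) := fun n =>
    (hbox n).choose_spec.choose_spec
  -- Step 2-3: a level above everything
  have hbound : ∀ n, ∃ δ : ι, ∀ β ∈ Fn n, β < δ := fun n => finset_bound (Fn n)
  choose bnd hbnd using hbound
  obtain ⟨βstar, hβstar⟩ := countable_sup bnd
  have hFβ : ∀ n, ∀ β ∈ Fn n, β < βstar := fun n β hβ =>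
    lt_trans (hbnd n β hβ) (hβstar n)
  -- Step 4: truncation
  set trunc : (ι → ℝ) → (ι → ℝ) := fun z ζ => if ζ < βstar then z ζ else 0 with htrunc
  have htrunc_lt : ∀ z (ζ : ι), ζ < βstar → trunc z ζ = z ζ := fun z ζ h => if_pos h
  have htrunc_ge : ∀ z (ζ : ι), ¬ (ζ < βstar) → trunc z ζ = 0 := fun z ζ h => if_neg h
  have hgtrunc : ∀ n, |g (trunc (xx n)) - g (xx n)| < 1/4 := by
    intro n
    have h1 : trunc (xx n) ∈ box (xx n) (Fn n) (εn n) := by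
      intro β hβ
      rw [htrunc_lt _ _ (hFβ n β hβ)]
      simpa using (hspec n).1
    have h2 := (hspec n).2 h1
    rw [Set.mem_preimage, Metric.mem_ball, Real.dist_eq] at h2
    exact h2
  -- Step 5: designated fiber at βstar and its enumeration
  obtain ⟨q₀, hq₀⟩ := (levels_ok βstar).2
  set M : Set ℕ := levels βstar q₀ with hM
  obtain ⟨u, huP, huR⟩ := dependentChoice (α := ℕ) (fun _ m => m ∈ M)
    (fun _ m m' => m < m')
    hq₀.nonempty
    (fun n a ha => by
      obtain ⟨b, hb1, hb2⟩ := hq₀.exists_gt a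
      exact ⟨b, hb1, hb2⟩)
  have hu : StrictMono u := strictMono_nat_of_lt_succ huR
  -- Step 6: ancestors below βstar
  haveI : Nonempty ι := ⟨⟨0, Ordinal.omega_pos 1⟩⟩
  have hanc : ∀ ζ : ι, ζ < βstar →
      ∃ qζ : ℚ, act (levels ζ) qζ ∧ AlmSub M (levels ζ qζ) ∧ qζ < q₀ := fun ζ h =>
    (levels_below h).1 q₀ hq₀
  choose! qa hqa1 hqa2 hqa3 using hanc
  -- Step 7: the limit point
  set Qpt : ι → ℝ := fun ζ => if ζ < βstar then (codeQ (qa ζ) : ℝ) else 0 with hQpt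
  -- Step 8: convergence
  have hconv : ∀ p : ℕ, p < 2 →
      Filter.Tendsto (fun i => trunc (xx (2 * u i + p))) Filter.atTop (nhds Qpt) := by
    intro p hp
    rw [tendsto_pi_nhds]
    intro ζ
    by_cases hζ : ζ < βstar
    · have hQζ : Qpt ζ = (codeQ (qa ζ) : ℝ) := if_pos hζ
      rw [hQζ]
      have htz : ∀ i, trunc (xx (2*u i+p)) ζ = xval (2*u i+p) ζ := fun i => by
        rw [htrunc_lt _ _ hζ, xx_apply]
      rw [show (fun i => trunc (xx (2*u i+p)) ζ) = (fun i => xval (2*u i+p) ζ) from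
        funext htz]
      set k := codeQ (qa ζ) with hk
      have hfib_eq : fibOf ζ k = levels ζ (qa ζ) := by
        rw [fibOf, hk, Equiv.symm_apply_apply]
      have hMsub : AlmSub M (fibOf ζ k) := by rw [hfib_eq]; exact hqa2 ζ hζ
      set Bad : Set ℕ := (M \ fibOf ζ k) ∪ ⋃ k' ∈ Set.Iio k, (fibOf ζ k' ∩ fibOf ζ k)
        with hBad
      have hBadfin : Bad.Finite := by
        refine Set.Finite.union hMsub ?_
        refine Set.Finite.biUnion (Set.finite_Iio k) ?_
        intro k' hk'
        have hk'k : k' ≠ k := Nat.ne_of_lt hk'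
        have hlab : (codeQ.symm k' : ℚ) ≠ codeQ.symm k :=
          fun h => hk'k (by simpa using congrArg codeQ h)
        exact (levels_ok ζ).1 _ _ hlab
      rw [Metric.tendsto_atTop]
      intro ε hε
      obtain ⟨J, hJ⟩ := exists_nat_gt (1/ε)
      have hJpos : (0:ℝ) < J := lt_trans (by positivity) hJ
      have hfin2 : (Bad ∪ {m | m ∈ fibOf ζ k ∧ ((fibOf ζ k) ∩ Set.Iio m).ncard ≤ J}).Finite :=
        hBadfin.union (finite_small_rank ζ k J)
      obtain ⟨i0, hi0⟩ := eventually_avoid _ hfin2 u hu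
      refine ⟨i0, fun i hi => ?_⟩
      have havoid := hi0 i hi
      have hMem : u i ∈ M := huP i
      have hnotBad : u i ∉ Bad := fun h => havoid (Or.inl h)
      have hfibmem : u i ∈ fibOf ζ k := by
        by_contra h
        exact hnotBad (Or.inl ⟨hMem, h⟩)
      have hdiv : (2*u i+p)/2 = u i := by omega
      have hmod : (2*u i+p) % 2 = p := by omega
      have hass : assigned ζ ((2*u i+p)/2) := by rw [hdiv]; exact ⟨k, hfibmem⟩
      have hkof : kOf ζ (u i) = k := by
        have hle : kOf ζ (u i) ≤ k := Nat.sInf_le hfibmem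
        rcases Nat.lt_or_ge (kOf ζ (u i)) k with hlt | hge
        · exfalso
          apply hnotBad
          refine Or.inr ?_
          exact Set.mem_biUnion hlt ⟨kOf_mem ⟨k, hfibmem⟩, hfibmem⟩
        · omega
      have hrank : J < rankOf ζ (u i) := by
        have h1 : u i ∉ {m | m ∈ fibOf ζ k ∧ ((fibOf ζ k) ∩ Set.Iio m).ncard ≤ J} :=
          fun h => havoid (Or.inr h)
        rw [Set.mem_setOf_eq] at h1
        push_neg at h1
        have h2 := h1 hfibmem
        rw [rankOf, hkof]
        omega
      have hval : xval (2*u i+p) ζ =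
          (k:ℝ) + 1/(2*(rankOf ζ (u i):ℝ) + 2 + (p:ℕ)) := by
        rw [xval_assigned hass, hdiv, hmod, hkof]
      rw [hval, Real.dist_eq]
      have hD : (0:ℝ) < 2*(rankOf ζ (u i):ℝ) + 2 + (p:ℕ) := by positivity
      have habs : |(k:ℝ) + 1/(2*(rankOf ζ (u i):ℝ) + 2 + (p:ℕ)) - (k:ℝ)| =
          1/(2*(rankOf ζ (u i):ℝ) + 2 + (p:ℕ)) := by
        rw [show (k:ℝ) + 1/(2*(rankOf ζ (u i):ℝ) + 2 + (p:ℕ)) - (k:ℝ) =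
          1/(2*(rankOf ζ (u i):ℝ) + 2 + (p:ℕ)) by ring]
        exact abs_of_pos (by positivity)
      rw [habs]
      have hJr : (J:ℝ) < 2*(rankOf ζ (u i):ℝ) + 2 + (p:ℕ) := by
        have : (J:ℝ) < (rankOf ζ (u i) : ℝ) := by exact_mod_cast hrank
        have hp0 : (0:ℝ) ≤ (p:ℕ) := Nat.cast_nonneg _
        linarith
      calc 1/(2*(rankOf ζ (u i):ℝ) + 2 + (p:ℕ)) ≤ 1/(J:ℝ) := by
            apply one_div_le_one_div_of_le hJpos (le_of_lt hJr)
        _ < ε := by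
            rw [div_lt_iff₀ hJpos, mul_comm]
            exact (div_lt_iff₀ hε).1 hJ
    · have hQζ : Qpt ζ = 0 := if_neg hζ
      rw [hQζ]
      rw [show (fun i => trunc (xx (2*u i+p)) ζ) = (fun _ => (0:ℝ)) from
        funext (fun i => htrunc_ge _ _ hζ)]
      exact tendsto_const_nhds
  -- Step 9-10: contradiction
  have heven : Filter.Tendsto (fun i => g (trunc (xx (2*u i)))) Filter.atTop (nhds (g Qpt)) := by
    have := (hconv 0 (by norm_num))
    exact (g.continuous.tendsto Qpt).comp this
  have hodd : Filter.Tendsto (fun i => g (trunc (xx (2*u i+1)))) Filter.atTop (nhds (g Qpt)) :=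
    (g.continuous.tendsto Qpt).comp (hconv 1 (by norm_num))
  have hevenval : ∀ i, (3:ℝ)/4 ≤ g (trunc (xx (2*u i))) := by
    intro i
    have h1 := hgtrunc (2*u i)
    have h2 : g (xx (2*u i)) = 1 := by
      rw [hg]
      exact Even.neg_one_pow ⟨u i, by ring⟩
    rw [h2, abs_lt] at h1
    linarith [h1.1]
  have hoddval : ∀ i, g (trunc (xx (2*u i+1))) ≤ -(3:ℝ)/4 := by
    intro i
    have h1 := hgtrunc (2*u i+1)
    have h2 : g (xx (2*u i+1)) = -1 := by
      rw [hg]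
      exact Odd.neg_one_pow ⟨u i, by ring⟩
    rw [h2, abs_lt] at h1
    linarith [h1.2]
  have hge : (3:ℝ)/4 ≤ g Qpt := ge_of_tendsto' heven hevenval
  have hle : g Qpt ≤ -(3:ℝ)/4 := le_of_tendsto' hodd hoddval
  linarith

end CC


/-- There is a countably infinite subset of `ℝ^{ω₁}` that is closed, discrete in the
subspace topology, and not `C*`-embedded: some bounded continuous real-valued function on it
has no continuous extension to all of `ℝ^{ω₁}`. -/
theorem closed_copy_of_N_in_R_omega1_not_Cstar_embedded :
    ∃ N : Set (Omega1Index → ℝ),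
      N.Countable ∧ N.Infinite ∧ IsClosed N ∧ DiscreteTopology N ∧
      ∃ f : C(N, ℝ), (∃ M : ℝ, ∀ x : N, |f x| ≤ M) ∧
        ¬ ∃ g : C((Omega1Index → ℝ), ℝ), ∀ x : N, g x.val = f x := by
  classical
  refine ⟨CC.NN, CC.NN_countable, CC.NN_infinite, CC.NN_closed, CC.NN_discrete, ?_⟩
  have hxcoe : ∀ p : CC.NN, ∃ n, CC.xx n = p.val := fun p => p.2
  have hidx : ∀ p : CC.NN, CC.xx ((hxcoe p).choose) = p.val := fun p => (hxcoe p).choose_spec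
  set f0 : CC.NN → ℝ := fun p => (-1)^((hxcoe p).choose) with hf0
  have hidxn : ∀ n : ℕ, f0 ⟨CC.xx n, ⟨n, rfl⟩⟩ = (-1)^n := by
    intro n
    have h1 : CC.xx ((hxcoe ⟨CC.xx n, ⟨n, rfl⟩⟩).choose) = CC.xx n :=
      hidx ⟨CC.xx n, ⟨n, rfl⟩⟩
    have h2 := CC.xx_injective h1
    rw [hf0]
    simp only []
    rw [h2]
  have hfc : Continuous f0 := by
    haveI := CC.NN_discrete
    exact continuous_of_discreteTopology
  refine ⟨⟨f0, hfc⟩, ⟨1, fun p => ?_⟩, ?_⟩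
  · show |f0 p| ≤ 1
    rw [hf0]
    simp only []
    rw [abs_pow, abs_neg, abs_one, one_pow]
  · rintro ⟨g, hgext⟩
    apply CC.main_noext
    refine ⟨g, fun n => ?_⟩
    have h3 := hgext ⟨CC.xx n, ⟨n, rfl⟩⟩
    show g (CC.xx n) = _
    rw [h3]
    show f0 _ = _
    exact hidxn n
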